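/- Let G be a Hausdorff locally compact topological group and K a symmetric neighborhood of the identity 1 in G that generates G as a group. Then for every subset L of G with compact closure, G \ L has only finitely many K⁴-components; that is, there is a finite subset S of G \ L such that every element of G \ L is joined to some element of S by a K⁴-chain in G \ L. -/

import Mathlib

open Set Pointwise

/-- One step of a `K`-chain inside the set `A`. -/
def KStep {G : Type*} [Group G] (K A : Set G) (x y : G) : Prop :=
  x ∈ A ∧ y ∈ A ∧ x⁻¹ * y ∈ K

/-- `x` and `y` are joined by a `K`-chain inside `A`. -/
def KConn {G : Type*} [Group G] (K A : Set G) (x y : G) : Prop :=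
  Relation.ReflTransGen (KStep K A) x y

section Aux

variable {G : Type*} [Group G]

lemma kconn_mono {K K' A : Set G} (h : K ⊆ K') {x y : G} (hc : KConn K A x y) :
    KConn K' A x y :=
  Relation.ReflTransGen.mono (r := KStep K A) (p := KStep K' A)
    (fun _ _ hs => ⟨hs.1, hs.2.1, h hs.2.2⟩) _ _ hc

lemma kconn_symm {K A : Set G} (hK : K⁻¹ = K) {x y : G} (hc : KConn K A x y) :
    KConn K A y x := by
  induction hc with
  | refl => exact .refl
  | tail _ hbc ih =>
      obtain ⟨h1, h2, h3⟩ := hbc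
      refine Relation.ReflTransGen.head ⟨h2, h1, ?_⟩ ih
      rw [← hK]
      simpa [mul_inv_rev] using Set.inv_mem_inv.2 h3

lemma kconn_univ_translate {K : Set G} (g : G) {x y : G} (h : KConn K univ x y) :
    KConn K univ (g * x) (g * y) :=
  Relation.ReflTransGen.lift (r := KStep K univ) (p := KStep K univ) (fun a => g * a)
    (fun a b hs => ⟨trivial, trivial, by
      have := hs.2.2
      rwa [show (g*a)⁻¹ * (g*b) = a⁻¹ * b by group]⟩) _ _ h

lemma kconn_univ_of_gen {K : Set G} (hsymm : K⁻¹ = K) (hgen : Subgroup.closure K = ⊤)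
    (x y : G) : KConn K univ x y := by
  let H : Subgroup G :=
  { carrier := {h | KConn K univ 1 h}
    one_mem' := .refl
    mul_mem' := fun {a b} ha hb => ha.trans (by simpa [KConn] using kconn_univ_translate a hb)
    inv_mem' := fun {a} ha =>
      kconn_symm hsymm (by simpa using kconn_univ_translate a⁻¹ ha) }
  have hx : x⁻¹ * y ∈ H := by
    have hle : Subgroup.closure K ≤ H :=
      (Subgroup.closure_le H).2 (fun k hk =>
        Relation.ReflTransGen.single ⟨trivial, trivial, by simpa using hk⟩)
    rw [hgen] at hle
    exact hle (Subgroup.mem_top _)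
  simpa using kconn_univ_translate x hx

/-- If a `K`-chain in the whole group goes from outside `L` into `L`, then there is an
initial segment staying outside `L` ending one step away from `L`. -/
lemma kconn_escape {K L : Set G} (hsymm : K⁻¹ = K) {x y : G} (h : KConn K univ x y)
    (hy : y ∈ L) :
    x ∈ Lᶜ → ∃ e l k, l ∈ L ∧ k ∈ K ∧ e = l * k ∧ e ∈ Lᶜ ∧ KConn K Lᶜ x e := by
  induction h using Relation.ReflTransGen.head_induction_on with
  | refl => exact fun hx => absurd hy hx
  | @head a b hstep _ ih =>
      intro ha
      by_cases hb : b ∈ L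
      · refine ⟨a, b, b⁻¹ * a, hb, ?_, by group, ha, .refl⟩
        rw [← hsymm]
        simpa [mul_inv_rev] using Set.inv_mem_inv.2 hstep.2.2
      · obtain ⟨e, l, k, hl, hk, hek, he, hchain⟩ := ih hb
        exact ⟨e, l, k, hl, hk, hek, he,
          Relation.ReflTransGen.head ⟨ha, hb, hstep.2.2⟩ hchain⟩

end Aux

theorem locally_compact_group_finitely_many_K4_components
    {G : Type*} [Group G] [TopologicalSpace G] [IsTopologicalGroup G]
    [T2Space G] [LocallyCompactSpace G]
    (K : Set G) (hKnhds : K ∈ nhds (1 : G)) (hKsymm : K⁻¹ = K)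
    (hKgen : Subgroup.closure K = ⊤)
    (L : Set G) (hL : IsCompact (closure L)) :
    ∃ S : Finset G, (S : Set G) ⊆ Lᶜ ∧
      ∀ x ∈ Lᶜ, ∃ s ∈ S, KConn (K ^ 4) Lᶜ s x := by
  classical
  have h1K : (1 : G) ∈ K := mem_of_mem_nhds hKnhds
  have hK4eq : (K : Set G) ^ 4 = K * K * K * K := by
    rw [pow_succ, pow_succ, pow_succ, pow_one]
  have mem4 : ∀ a b c d : G, a ∈ K → b ∈ K → c ∈ K → d ∈ K → a * b * c * d ∈ K ^ 4 := by
    intro a b c d ha hb hc hd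
    rw [hK4eq]
    exact mul_mem_mul (mul_mem_mul (mul_mem_mul ha hb) hc) hd
  have hK4 : K ⊆ K ^ 4 := by
    intro k hk
    have : k = 1 * 1 * 1 * k := by group
    rw [this]
    exact mem4 _ _ _ _ h1K h1K h1K hk
  rcases L.eq_empty_or_nonempty with rfl | ⟨l0, hl0⟩
  · refine ⟨{1}, by simp, fun x _ => ⟨1, Finset.mem_singleton_self 1, ?_⟩⟩
    have h := kconn_univ_of_gen hKsymm hKgen (1 : G) x
    rw [compl_empty]
    exact kconn_mono hK4 h
  · -- cover closure L by finitely many translates g • K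
    have hnhd : ∀ g ∈ closure L, g • K ∈ nhds g := by
      intro g _
      have := smul_mem_nhds_smul g hKnhds
      simpa using this
    obtain ⟨t, hts, htcov⟩ := hL.elim_nhds_subcover (fun g => g • K) hnhd
    let P : G → Prop := fun g => ((g • (K * K)) ∩ Lᶜ).Nonempty
    let rep : G → G := fun g => if h : P g then h.choose else 1
    have hrep : ∀ g, P g → rep g ∈ (g • (K * K)) ∩ Lᶜ := by
      intro g hg
      simp only [rep, dif_pos hg]
      exact hg.choose_spec
    refine ⟨(t.filter P).image rep, ?_, ?_⟩
    · intro s hs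
      simp only [Finset.coe_image, Set.mem_image, Finset.mem_coe, Finset.mem_filter] at hs
      obtain ⟨g, ⟨_, hPg⟩, rfl⟩ := hs
      exact (hrep g hPg).2
    · intro x hx
      -- a K-chain from x to l0 in the whole group
      have hchain := kconn_univ_of_gen hKsymm hKgen x l0
      obtain ⟨e, l, k, hlL, hkK, hek, heL, hxe⟩ := kconn_escape hKsymm hchain hl0 hx
      -- l lies in some translate g • K with g ∈ t
      have hlcov : l ∈ ⋃ g ∈ t, g • K := htcov (subset_closure hlL)
      simp only [Set.mem_iUnion] at hlcov
      obtain ⟨g, hgt, hlg⟩ := hlcov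
      obtain ⟨k', hk'K, hgk'⟩ := hlg
      -- e ∈ g • (K*K), so P g holds
      have heKK : e ∈ g • (K * K) := by
        refine ⟨k' * k, mul_mem_mul hk'K hkK, ?_⟩
        simp only [smul_eq_mul] at hgk' ⊢
        rw [hek, ← hgk', mul_assoc]
      have hPg : P g := ⟨e, heKK, heL⟩
      obtain ⟨hsKK, hsL⟩ := hrep g hPg
      refine ⟨rep g, ?_, ?_⟩
      · exact Finset.mem_image_of_mem rep (Finset.mem_filter.2 ⟨hgt, hPg⟩)
      · -- single K⁴ step from rep g to e, then chain e → x
        obtain ⟨m, hmKK, hgm⟩ := hsKK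
        obtain ⟨k1, hk1, k2, hk2, hk12⟩ := hmKK
        have hstep : KStep (K ^ 4) Lᶜ (rep g) e := by
          refine ⟨hsL, heL, ?_⟩
          have heg : e = g * (k' * k) := by
            simp only [smul_eq_mul] at hgk'
            rw [hek, ← hgk', mul_assoc]
          have hrg : rep g = g * (k1 * k2) := by
            simp only [smul_eq_mul] at hgm
            rw [← hgm]
            exact congrArg (fun z => g * z) hk12.symm
          have : (rep g)⁻¹ * e = k2⁻¹ * k1⁻¹ * k' * k := by
            rw [hrg, heg]; group
          rw [this]
          exact mem4 _ _ _ _ (by rw [← hKsymm]; exact Set.inv_mem_inv.2 hk2)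
            (by rw [← hKsymm]; exact Set.inv_mem_inv.2 hk1) hk'K hkK
        exact Relation.ReflTransGen.head hstep (kconn_mono hK4 (kconn_symm hKsymm hxe))
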